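/- Let V be a countable index set, let H(x) be a complex Hilbert space for each x ∈ V, let H = ⊕_{x∈V} H(x) be their Hilbert space (ℓ²-) direct sum, and let P_x ∈ B(H) denote the orthogonal projection of H onto the summand H(x). Let Ed be a set of edges with source and range maps s, r : Ed → V. Suppose that for each edge e ∈ Ed there are two finite families of bounded operators {A_{e,i}}_{i∈Fin(n_e)} and {B_{e,i}}_{i∈Fin(n_e)} on H, each supported between the source and range summands (that is, A_{e,i} = P_{r(e)} A_{e,i} P_{s(e)} and B_{e,i} = P_{r(e)} B_{e,i} P_{s(e)} for all i), and that they represent the same completely positive map, i.e. ∑_{i} A_{e,i} ρ A_{e,i}* = ∑_{i} B_{e,i} ρ B_{e,i}* for every ρ ∈ B(H). Assume each H(x) is finite-dimensional. Then the C*-subalgebra of B(H) generated by {P_x : x ∈ V} ∪ {A_{e,i} : e ∈ Ed, i ∈ Fin(n_e)} is equal to the C*-subalgebra generated by {P_x : x ∈ V} ∪ {B_{e,i} : e ∈ Ed, i ∈ Fin(n_e)}. -/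

import Mathlib

/-- The orthogonal projection of the Hilbert space direct sum `lp H 2` onto the
summand `H x`. -/
noncomputable def lpProj {V : Type*} [DecidableEq V] (H : V → Type*)
    [∀ x, NormedAddCommGroup (H x)] [∀ x, InnerProductSpace ℂ (H x)] (x : V) :
    lp H 2 →L[ℂ] lp H 2 :=
  LinearMap.mkContinuous
    { toFun := fun f => lp.single 2 x (f x)
      map_add' := fun f g => by
        apply lp.ext
        funext j
        by_cases h : j = x
        · subst h
          simp [lp.single_apply_self, lp.coeFn_add]
        · simp [lp.single_apply_ne 2 x _ h, lp.coeFn_add]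
      map_smul' := fun c f => by
        apply lp.ext
        funext j
        by_cases h : j = x
        · subst h
          simp [lp.single_apply_self, lp.coeFn_smul]
        · simp [lp.single_apply_ne 2 x _ h, lp.coeFn_smul] }
    1
    (fun f => by
      have h1 : ‖lp.single 2 x (f x)‖ = ‖f x‖ := lp.norm_single (by norm_num) x (f x)
      have h2 : ‖f x‖ ≤ ‖f‖ := lp.norm_apply_le_norm (by norm_num) f x
      simpa [h1] using h2)



open scoped InnerProductSpace ComplexConjugate

lemma kraus_mem_span {n : ℕ} {E : Type*} [NormedAddCommGroup E] [InnerProductSpace ℂ E]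
    [CompleteSpace E] (A B : Fin n → E →L[ℂ] E)
    (hrep : ∀ ρ : E →L[ℂ] E,
      ∑ i, A i * ρ * ContinuousLinearMap.adjoint (A i) =
        ∑ i, B i * ρ * ContinuousLinearMap.adjoint (B i)) (j : Fin n) :
    B j ∈ Submodule.span ℂ (Set.range A) := by
  by_contra h
  obtain ⟨f, hfx, hker⟩ := Submodule.exists_dual_map_eq_bot_of_notMem h inferInstance
  have hfA : ∀ i, f (A i) = 0 := by
    intro i
    have : f (A i) ∈ (Submodule.span ℂ (Set.range A)).map f :=
      Submodule.mem_map_of_mem (Submodule.subset_span ⟨i, rfl⟩)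
    rwa [hker, Submodule.mem_bot] at this
  -- key identity
  have key : ∀ η ζ : E, ∑ i, (⟪A i η, ζ⟫_ℂ) • A i = ∑ i, (⟪B i η, ζ⟫_ℂ) • B i := by
    intro η ζ
    ext w
    have := hrep ((innerSL ℂ η).smulRight w)
    have h2 := congrFun (congrArg (fun T : E →L[ℂ] E => (T : E → E)) this) ζ
    simp only [ContinuousLinearMap.sum_apply, ContinuousLinearMap.mul_apply,
      ContinuousLinearMap.smulRight_apply, innerSL_apply_apply,
      ContinuousLinearMap.adjoint_inner_right, map_smul] at h2
    simpa [ContinuousLinearMap.sum_apply, ContinuousLinearMap.smul_apply] using h2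
  have hfB : ∀ η ζ : E, ∑ i, (⟪B i η, ζ⟫_ℂ) * f (B i) = 0 := by
    intro η ζ
    have := congrArg f (key η ζ)
    simpa [map_sum, map_smul, hfA] using this.symm
  set T : E →L[ℂ] E := ∑ i, (conj (f (B i))) • B i with hT
  have hT0 : T = 0 := by
    ext η
    apply ext_inner_right ℂ
    intro ζ
    have := hfB η ζ
    simp only [hT, ContinuousLinearMap.sum_apply, ContinuousLinearMap.smul_apply,
      sum_inner, inner_smul_left, RingHom.id_apply, starRingEnd_self_apply]
    simpa [mul_comm] using this
  have hfT : f T = 0 := by rw [hT0]; simp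
  rw [hT, map_sum] at hfT
  simp only [map_smul, smul_eq_mul] at hfT
  have hsum : ∑ i, Complex.normSq (f (B i)) = 0 := by
    have : ((∑ i, Complex.normSq (f (B i)) : ℝ) : ℂ) = 0 := by
      rw [Complex.ofReal_sum]
      rw [← hfT]
      exact Finset.sum_congr rfl fun i _ => by
        rw [Complex.normSq_eq_conj_mul_self]
    exact_mod_cast this
  have := (Finset.sum_eq_zero_iff_of_nonneg
    (fun i _ => Complex.normSq_nonneg (f (B i)))).mp hsum j (Finset.mem_univ j)
  exact hfx (Complex.normSq_eq_zero.mp this)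


set_option maxHeartbeats 2000000 in
/-- The C*-algebra generated by the vertex projections together with a
choice of Kraus operators for the CP maps attached to the edges does not depend on the
choice of Kraus representations. -/
theorem cstar_algebra_independent_of_kraus_choice
    {V : Type*} [Countable V] [DecidableEq V]
    (H : V → Type*) [∀ x, NormedAddCommGroup (H x)] [∀ x, InnerProductSpace ℂ (H x)]
    [∀ x, FiniteDimensional ℂ (H x)]
    {Ed : Type*} (s r : Ed → V) (n : Ed → ℕ)
    (A B : ∀ e : Ed, Fin (n e) → (lp H 2 →L[ℂ] lp H 2))
    (hA : ∀ e i, A e i = lpProj H (r e) * A e i * lpProj H (s e))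
    (hB : ∀ e i, B e i = lpProj H (r e) * B e i * lpProj H (s e))
    (hrep : ∀ e (ρ : lp H 2 →L[ℂ] lp H 2),
      ∑ i, A e i * ρ * ContinuousLinearMap.adjoint (A e i) =
        ∑ i, B e i * ρ * ContinuousLinearMap.adjoint (B e i)) :
    (NonUnitalStarAlgebra.adjoin ℂ
        (Set.range (lpProj H) ∪ {T | ∃ e i, T = A e i})).topologicalClosure =
      (NonUnitalStarAlgebra.adjoin ℂ
        (Set.range (lpProj H) ∪ {T | ∃ e i, T = B e i})).topologicalClosure := by
  have main : ∀ A B : ∀ e : Ed, Fin (n e) → (lp H 2 →L[ℂ] lp H 2),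
      (∀ e (ρ : lp H 2 →L[ℂ] lp H 2),
        ∑ i, A e i * ρ * ContinuousLinearMap.adjoint (A e i) =
          ∑ i, B e i * ρ * ContinuousLinearMap.adjoint (B e i)) →
      (NonUnitalStarAlgebra.adjoin ℂ
          (Set.range (lpProj H) ∪ {T | ∃ e i, T = B e i})).topologicalClosure ≤
        (NonUnitalStarAlgebra.adjoin ℂ
          (Set.range (lpProj H) ∪ {T | ∃ e i, T = A e i})).topologicalClosure := by
    intro A B hrep
    set SA := NonUnitalStarAlgebra.adjoin ℂ
      (Set.range (lpProj H) ∪ {T | ∃ e i, T = A e i}) with hSA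
    have hsub : (Set.range (lpProj H) ∪ {T | ∃ e i, T = B e i}) ⊆ SA := by
      rintro T (hT | ⟨e, i, rfl⟩)
      · exact NonUnitalStarAlgebra.subset_adjoin ℂ _ (Or.inl hT)
      · have hmem : B e i ∈ Submodule.span ℂ (Set.range (A e)) :=
          kraus_mem_span (A e) (B e) (hrep e) i
        have hAi : ∀ x ∈ Set.range (A e), x ∈ SA := by
          rintro x ⟨k, rfl⟩
          exact NonUnitalStarAlgebra.subset_adjoin ℂ _ (Or.inr ⟨e, k, rfl⟩)
        exact Submodule.span_induction (p := fun x _ => x ∈ SA) (fun x hx => hAi x hx)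
          (zero_mem SA) (fun x y _ _ hx hy => add_mem hx hy)
          (fun c x _ hx => SMulMemClass.smul_mem c hx) hmem
    refine NonUnitalStarSubalgebra.topologicalClosure_minimal _
      (le_trans (NonUnitalStarAlgebra.adjoin_le hsub) SA.le_topologicalClosure)
      SA.isClosed_topologicalClosure
  exact le_antisymm (main B A (fun e ρ => (hrep e ρ).symm)) (main A B hrep)
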